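/- arXiv:1908.09113 — 2 statements merged into one kernel-verified Lean document; each statement's English description precedes it below -/
import Mathlib

section
/- Let φ : ℝ² → ℝ be 1-Lipschitz and suppose [x,y] and [x',y'] are two segments with φ(x) - φ(y) = |x - y| and φ(x') - φ(y') = |x' - y'|. If the open segments (x,y) and (x',y') intersect at a point z with z ∉ {x,y} ∩ {x',y'}, and the two segments are not collinear, then a contradiction follows; i.e., two distinct transport rays cannot cross at a point interior to both of them. -/
/-- On a transport ray, the potential is affine with slope 1: if `z` lies on the segment
`[x,y]` and `φ x - φ y = ‖x - y‖` for a 1-Lipschitz `φ`, then `φ x - φ z = ‖x - z‖` and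
`φ z - φ y = ‖z - y‖`. -/
lemma lip_affine_on_ray
    (φ : EuclideanSpace ℝ (Fin 2) → ℝ) (hφ : LipschitzWith 1 φ)
    (x y z : EuclideanSpace ℝ (Fin 2))
    (hxy : φ x - φ y = ‖x - y‖) (hz : z ∈ segment ℝ x y) :
    φ x - φ z = ‖x - z‖ ∧ φ z - φ y = ‖z - y‖ := by
  have hsum : dist x z + dist z y = dist x y := dist_add_dist_of_mem_segment hz
  have h1 : φ x - φ z ≤ ‖x - z‖ := by
    have := hφ.dist_le_mul x z
    rw [NNReal.coe_one, one_mul] at this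
    calc φ x - φ z ≤ dist (φ x) (φ z) := by
          rw [Real.dist_eq]; exact le_abs_self _
      _ ≤ dist x z := this
      _ = ‖x - z‖ := dist_eq_norm x z
  have h2 : φ z - φ y ≤ ‖z - y‖ := by
    have := hφ.dist_le_mul z y
    rw [NNReal.coe_one, one_mul] at this
    calc φ z - φ y ≤ dist (φ z) (φ y) := by
          rw [Real.dist_eq]; exact le_abs_self _
      _ ≤ dist z y := this
      _ = ‖z - y‖ := dist_eq_norm z y
  have hsum' : ‖x - z‖ + ‖z - y‖ = ‖x - y‖ := by
    simpa [dist_eq_norm] using hsum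
  have heq : (φ x - φ z) + (φ z - φ y) = ‖x - z‖ + ‖z - y‖ := by
    rw [hsum']; linarith [hxy]
  constructor <;> linarith

/-- If `φ x - φ z = ‖x - z‖` and `φ z - φ y' = ‖z - y'‖` for 1-Lipschitz `φ`, then `z` lies
on the segment `[x, y']`. -/
lemma mem_segment_of_slopes
    (φ : EuclideanSpace ℝ (Fin 2) → ℝ) (hφ : LipschitzWith 1 φ)
    (x y' z : EuclideanSpace ℝ (Fin 2))
    (h1 : φ x - φ z = ‖x - z‖) (h2 : φ z - φ y' = ‖z - y'‖) :
    z ∈ segment ℝ x y' := by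
  have hlip : φ x - φ y' ≤ ‖x - y'‖ := by
    have := hφ.dist_le_mul x y'
    rw [NNReal.coe_one, one_mul] at this
    calc φ x - φ y' ≤ dist (φ x) (φ y') := by
          rw [Real.dist_eq]; exact le_abs_self _
      _ ≤ dist x y' := this
      _ = ‖x - y'‖ := dist_eq_norm x y'
  have htri : ‖x - y'‖ ≤ ‖x - z‖ + ‖z - y'‖ := norm_sub_le_norm_sub_add_norm_sub x z y'
  have heq : dist x z + dist z y' = dist x y' := by
    rw [dist_eq_norm, dist_eq_norm, dist_eq_norm]
    linarith
  exact (dist_add_dist_eq_iff.1 heq).mem_segment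

/-- two transport rays of a 1-Lipschitz potential which are not contained in a
common line cannot cross at a point interior to both of them. -/
theorem transport_rays_cannot_cross
    (φ : EuclideanSpace ℝ (Fin 2) → ℝ) (hφ : LipschitzWith 1 φ)
    (x y x' y' z : EuclideanSpace ℝ (Fin 2))
    (hxy : φ x - φ y = ‖x - y‖) (hxy' : φ x' - φ y' = ‖x' - y'‖)
    (hz : z ∈ openSegment ℝ x y) (hz' : z ∈ openSegment ℝ x' y')
    (hnotcol : ¬ Collinear ℝ ({x, y, x', y'} : Set (EuclideanSpace ℝ (Fin 2)))) :
    False := by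
  -- degenerate cases
  rcases eq_or_ne x y with rfl | hxyne
  · rw [openSegment_same] at hz
    subst hz
    have hw : Wbtw ℝ x' z y' := mem_segment_iff_wbtw.1 (openSegment_subset_segment ℝ _ _ hz')
    exact hnotcol <| hw.collinear.subset <| by
      intro p hp
      simp only [Set.mem_insert_iff, Set.mem_singleton_iff] at hp ⊢
      tauto
  rcases eq_or_ne x' y' with rfl | hxyne'
  · rw [openSegment_same] at hz'
    subst hz'
    have hw : Wbtw ℝ x z y := mem_segment_iff_wbtw.1 (openSegment_subset_segment ℝ _ _ hz)
    exact hnotcol <| hw.collinear.subset <| by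
      intro p hp
      simp only [Set.mem_insert_iff, Set.mem_singleton_iff] at hp ⊢
      tauto
  -- z is distinct from all four endpoints
  have hzx : z ≠ x := by
    rintro rfl; exact hxyne (left_mem_openSegment_iff.1 hz)
  have hzy : z ≠ y := by
    rintro rfl; exact hxyne (right_mem_openSegment_iff.1 hz)
  have hzx' : z ≠ x' := by
    rintro rfl; exact hxyne' (left_mem_openSegment_iff.1 hz')
  have hzy' : z ≠ y' := by
    rintro rfl; exact hxyne' (right_mem_openSegment_iff.1 hz')
  have hzs : z ∈ segment ℝ x y := openSegment_subset_segment ℝ _ _ hz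
  have hzs' : z ∈ segment ℝ x' y' := openSegment_subset_segment ℝ _ _ hz'
  -- slopes along both rays
  obtain ⟨h1, h2⟩ := lip_affine_on_ray φ hφ x y z hxy hzs
  obtain ⟨h1', h2'⟩ := lip_affine_on_ray φ hφ x' y' z hxy' hzs'
  -- cross segments
  have hcross1 : z ∈ segment ℝ x y' := mem_segment_of_slopes φ hφ x y' z h1 h2'
  have hcross2 : z ∈ segment ℝ x' y := mem_segment_of_slopes φ hφ x' y z h1' h2
  -- collinearity facts
  have c1 : Collinear ℝ ({x, z, y} : Set _) := (mem_segment_iff_wbtw.1 hzs).collinear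
  have c2 : Collinear ℝ ({x', z, y'} : Set _) := (mem_segment_iff_wbtw.1 hzs').collinear
  have c3 : Collinear ℝ ({x, z, y'} : Set _) := (mem_segment_iff_wbtw.1 hcross1).collinear
  have c4 : Collinear ℝ ({x', z, y} : Set _) := (mem_segment_iff_wbtw.1 hcross2).collinear
  -- everything lies on line[z, x]
  have hy : y ∈ line[ℝ, z, x] :=
    c1.mem_affineSpan_of_mem_of_ne (by simp) (by simp) (by simp) hzx
  have hy' : y' ∈ line[ℝ, z, x] :=
    c3.mem_affineSpan_of_mem_of_ne (by simp) (by simp) (by simp) hzx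
  have hline : line[ℝ, z, y] ≤ line[ℝ, z, x] := by
    rw [affineSpan_le]
    intro p hp
    simp only [Set.mem_insert_iff, Set.mem_singleton_iff] at hp
    rcases hp with rfl | rfl
    · exact left_mem_affineSpan_pair _ _ _
    · exact hy
  have hx' : x' ∈ line[ℝ, z, x] := by
    have : x' ∈ line[ℝ, z, y] :=
      c4.mem_affineSpan_of_mem_of_ne (by simp) (by simp) (by simp) hzy
    exact hline this
  have hall : Collinear ℝ ({y, x', y', z, x} : Set _) :=
    collinear_insert_insert_insert_of_mem_affineSpan_pair hy hx' hy'
  exact hnotcol <| hall.subset <| by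
    intro p hp
    simp only [Set.mem_insert_iff, Set.mem_singleton_iff] at hp ⊢
    tauto
end

section
/- Mass of the Beckmann flow induced by a transport plan equals the transport cost: with w_γ defined by ⟨w_γ, ξ⟩ = ∫_{K×K} ∫₀¹ ξ((1-t)x+ty)·(y-x) dt dγ(x,y), one has |w_γ|(K) ≤ ∫_{K×K} |x - y| dγ(x,y). Consequently, if γ is an optimal transport plan and the strong duality min(Kantorovich) = sup(dual) holds, then w_γ minimizes |v|(K) among all vector measures v with ∇·v = f⁺ - f⁻, and min |v|(K) = ∫ |x-y| dγ. -/
set_option maxHeartbeats 1000000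


open MeasureTheory
open scoped RealInnerProductSpace ENNReal NNReal

noncomputable section

abbrev E2 := EuclideanSpace ℝ (Fin 2)

/-- The transport density `σ_γ` of a plan `γ`, defined by
`⟨σ_γ, φ⟩ = ∫∫₀¹ φ((1-t)x + ty)|x - y| dt dγ(x,y)`. -/
def transportDensity (γ : Measure (E2 × E2)) : Measure E2 :=
  Measure.map (fun q : ℝ × (E2 × E2) => (1 - q.1) • q.2.1 + q.1 • q.2.2)
    ((((volume : Measure ℝ).restrict (Set.Icc 0 1)).prod γ).withDensity
      fun q => edist q.2.1 q.2.2)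

namespace Beckmann

def Tmap : ℝ × (E2 × E2) → E2 := fun q => (1 - q.1) • q.2.1 + q.1 • q.2.2

lemma continuous_Tmap : Continuous Tmap := by
  unfold Tmap
  fun_prop

lemma measurable_Tmap : Measurable Tmap := continuous_Tmap.measurable

def base (γ : Measure (E2 × E2)) : Measure (ℝ × (E2 × E2)) :=
  ((volume : Measure ℝ).restrict (Set.Icc 0 1)).prod γ

lemma transportDensity_eq (γ : Measure (E2 × E2)) :
    transportDensity γ
      = ((base γ).withDensity fun q => edist q.2.1 q.2.2).map Tmap := rfl

instance (γ : Measure (E2 × E2)) [IsFiniteMeasure γ] : IsFiniteMeasure (base γ) := by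
  unfold base
  infer_instance

lemma transportDensity_apply (γ : Measure (E2 × E2)) {s : Set E2} (hs : MeasurableSet s) :
    transportDensity γ s = ∫⁻ q in Tmap ⁻¹' s, edist q.2.1 q.2.2 ∂(base γ) := by
  rw [transportDensity_eq, Measure.map_apply measurable_Tmap hs,
    withDensity_apply _ (measurable_Tmap hs)]

lemma transportDensity_univ (γ : Measure (E2 × E2)) [SFinite γ] :
    transportDensity γ Set.univ = ∫⁻ p, edist p.1 p.2 ∂γ := by
  rw [transportDensity_apply γ MeasurableSet.univ]
  have : Tmap ⁻¹' Set.univ = Set.univ := by simp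
  rw [this, Measure.restrict_univ]
  unfold base
  have h := MeasureTheory.lintegral_prod (μ := (volume : Measure ℝ).restrict (Set.Icc 0 1))
    (ν := γ) (fun q => edist q.2.1 q.2.2)
    ((measurable_edist.comp measurable_snd).aemeasurable)
  rw [h]
  simp only []
  rw [lintegral_const, Measure.restrict_apply_univ, Real.volume_Icc]
  norm_num

end Beckmann

namespace Beckmann2
open Beckmann

variable {γ : Measure (E2 × E2)} {K : Set E2}

lemma ae_base_seg [SFinite γ] (hKc : IsClosed K)
    (hseg : ∀ᵐ p ∂γ, segment ℝ p.1 p.2 ⊆ K) :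
    ∀ᵐ q ∂(base γ), q.1 ∈ Set.Icc (0:ℝ) 1 ∧ segment ℝ q.2.1 q.2.2 ⊆ K := by
  rw [ae_iff]
  set S : Set (E2 × E2) := {p | segment ℝ p.1 p.2 ⊆ K} with hS
  have hγS : γ Sᶜ = 0 := by
    rw [hS, Set.compl_setOf]
    exact ae_iff.mp hseg
  have hsub : {q : ℝ × (E2 × E2) | ¬(q.1 ∈ Set.Icc (0:ℝ) 1 ∧ segment ℝ q.2.1 q.2.2 ⊆ K)}
      ⊆ ((Set.Icc (0:ℝ) 1)ᶜ ×ˢ Set.univ) ∪ (Set.univ ×ˢ Sᶜ) := by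
    intro q hq
    simp only [Set.mem_setOf_eq, not_and_or] at hq
    rcases hq with h | h
    · exact Or.inl ⟨h, Set.mem_univ _⟩
    · exact Or.inr ⟨Set.mem_univ _, h⟩
  refine le_antisymm ?_ zero_le
  refine le_trans (measure_mono hsub) ?_
  refine le_trans (measure_union_le _ _) ?_
  unfold base
  rw [Measure.prod_prod, Measure.prod_prod]
  have h1 : (volume.restrict (Set.Icc (0:ℝ) 1)) (Set.Icc (0:ℝ) 1)ᶜ = 0 := by
    rw [Measure.restrict_apply (measurableSet_Icc.compl)]
    simp
  rw [h1, hγS]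
  simp

lemma ae_base_mem [SFinite γ] (hKc : IsClosed K)
    (hseg : ∀ᵐ p ∂γ, segment ℝ p.1 p.2 ⊆ K) :
    ∀ᵐ q ∂(base γ), Tmap q ∈ K ∧ q.2.1 ∈ K ∧ q.2.2 ∈ K := by
  filter_upwards [ae_base_seg hKc hseg] with q hq
  obtain ⟨ht, hsegq⟩ := hq
  refine ⟨?_, hsegq (left_mem_segment ℝ _ _), hsegq (right_mem_segment ℝ _ _)⟩
  apply hsegq
  rw [segment_eq_image ℝ]
  exact ⟨q.1, ht, rfl⟩

lemma integrable_dist_of_ae_bound {D : ℝ} [IsFiniteMeasure γ]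
    (hd : ∀ᵐ p ∂γ, dist p.1 p.2 ≤ D) :
    Integrable (fun p : E2 × E2 => dist p.1 p.2) γ := by
  refine Integrable.mono' (integrable_const D)
    ((continuous_dist.comp (continuous_fst.prodMk continuous_snd)).aestronglyMeasurable) ?_
  filter_upwards [hd] with p hp
  rwa [Real.norm_of_nonneg dist_nonneg]

lemma transportDensity_univ_eq [IsFiniteMeasure γ]
    (hint : Integrable (fun p : E2 × E2 => dist p.1 p.2) γ) :
    transportDensity γ Set.univ = ENNReal.ofReal (∫ p, dist p.1 p.2 ∂γ) := by
  rw [transportDensity_univ γ]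
  rw [ofReal_integral_eq_lintegral_ofReal hint (.of_forall fun p => dist_nonneg)]
  simp_rw [edist_dist]

lemma isFiniteMeasure_transportDensity [IsFiniteMeasure γ]
    (hint : Integrable (fun p : E2 × E2 => dist p.1 p.2) γ) :
    IsFiniteMeasure (transportDensity γ) := by
  constructor
  rw [transportDensity_univ_eq hint]
  exact ENNReal.ofReal_lt_top

lemma transportDensity_compl_K [SFinite γ] (hKc : IsClosed K)
    (hseg : ∀ᵐ p ∂γ, segment ℝ p.1 p.2 ⊆ K) :
    transportDensity γ Kᶜ = 0 := by
  rw [transportDensity_apply γ hKc.measurableSet.compl]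
  have h0 : (base γ) (Tmap ⁻¹' Kᶜ) = 0 := by
    have := ae_base_mem hKc hseg
    rw [ae_iff] at this
    refine le_antisymm (le_trans (measure_mono ?_) this.le) zero_le
    intro q hq
    simp only [Set.mem_preimage, Set.mem_compl_iff] at hq
    simp only [Set.mem_setOf_eq, not_and_or]
    exact Or.inl hq
  rw [← MeasureTheory.setLIntegral_measure_zero _ _ h0]
end Beckmann2

namespace Beckmann3
open Beckmann Beckmann2

lemma abs_coord_le (v : E2) (i : Fin 2) : |v i| ≤ ‖v‖ := by
  have h : v i = ⟪EuclideanSpace.single i (1:ℝ), v⟫ := by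
    rw [EuclideanSpace.inner_single_left]
    simp
  rw [h]
  refine le_trans (abs_real_inner_le_norm _ _) ?_
  rw [EuclideanSpace.norm_single]
  simp

lemma coord_sub_le_dist (x y : E2) (i : Fin 2) : x i - y i ≤ dist x y := by
  have h1 : x i - y i ≤ |(x - y) i| := by
    have : (x - y) i = x i - y i := rfl
    rw [this]
    exact le_abs_self _
  refine le_trans h1 ?_
  rw [dist_eq_norm]
  exact abs_coord_le _ _

lemma continuous_coord_sub (i : Fin 2) :
    Continuous (fun q : ℝ × (E2 × E2) => q.2.1 i - q.2.2 i) :=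
  (((EuclideanSpace.proj i : E2 →L[ℝ] ℝ)).continuous.comp (continuous_fst.comp continuous_snd)).sub
    (((EuclideanSpace.proj i : E2 →L[ℝ] ℝ)).continuous.comp (continuous_snd.comp continuous_snd))

lemma measurable_coordP (i : Fin 2) :
    Measurable (fun q : ℝ × (E2 × E2) => ENNReal.ofReal (q.2.1 i - q.2.2 i)) := by
  exact ENNReal.measurable_ofReal.comp (continuous_coord_sub i).measurable

def nuP (γ : Measure (E2 × E2)) (i : Fin 2) : Measure E2 :=
  ((base γ).withDensity fun q => ENNReal.ofReal (q.2.1 i - q.2.2 i)).map Tmap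

def nuM (γ : Measure (E2 × E2)) (i : Fin 2) : Measure E2 :=
  ((base γ).withDensity fun q => ENNReal.ofReal (q.2.2 i - q.2.1 i)).map Tmap

lemma nuP_le (γ : Measure (E2 × E2)) (i : Fin 2) : nuP γ i ≤ transportDensity γ := by
  rw [transportDensity_eq]
  refine Measure.map_mono ?_ measurable_Tmap
  refine withDensity_mono (.of_forall fun q => ?_)
  simp only
  rw [edist_dist]
  exact ENNReal.ofReal_le_ofReal (coord_sub_le_dist _ _ _)

lemma nuM_le (γ : Measure (E2 × E2)) (i : Fin 2) : nuM γ i ≤ transportDensity γ := by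
  rw [transportDensity_eq]
  refine Measure.map_mono ?_ measurable_Tmap
  refine withDensity_mono (.of_forall fun q => ?_)
  simp only
  rw [edist_comm, edist_dist]
  exact ENNReal.ofReal_le_ofReal (coord_sub_le_dist _ _ _)

def wdir (γ : Measure (E2 × E2)) : E2 → E2 := fun x =>
  (WithLp.toLp 2 (fun i => ((nuP γ i).rnDeriv (transportDensity γ) x).toReal
          - ((nuM γ i).rnDeriv (transportDensity γ) x).toReal) : EuclideanSpace ℝ (Fin 2))

end Beckmann3

namespace Beckmann4
open Beckmann Beckmann2 Beckmann3

variable {γ : Measure (E2 × E2)} {K : Set E2}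

lemma inner_eq_sum (a b : E2) : ⟪a, b⟫ = ∑ i, a i * b i := by
  simp [PiLp.inner_apply, RCLike.inner_apply, conj_trivial]
  ring

lemma ae_dist_le [IsFiniteMeasure γ] (hK : IsCompact K)
    (hseg : ∀ᵐ p ∂γ, segment ℝ p.1 p.2 ⊆ K) :
    ∀ᵐ p ∂γ, dist p.1 p.2 ≤ Metric.diam K := by
  filter_upwards [hseg] with p hp
  exact Metric.dist_le_diam_of_mem hK.isBounded (hp (left_mem_segment ℝ _ _))
    (hp (right_mem_segment ℝ _ _))

lemma ae_base_dist_le [IsFiniteMeasure γ] (hK : IsCompact K)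
    (hseg : ∀ᵐ p ∂γ, segment ℝ p.1 p.2 ⊆ K) :
    ∀ᵐ q ∂(base γ), dist q.2.1 q.2.2 ≤ Metric.diam K := by
  filter_upwards [ae_base_mem hK.isClosed hseg] with q hq
  exact Metric.dist_le_diam_of_mem hK.isBounded hq.2.1 hq.2.2

lemma integrable_coord_sub [IsFiniteMeasure γ] (hK : IsCompact K)
    (hseg : ∀ᵐ p ∂γ, segment ℝ p.1 p.2 ⊆ K) (i : Fin 2) (A : Set (ℝ × (E2 × E2))) :
    Integrable (fun q : ℝ × (E2 × E2) => q.2.1 i - q.2.2 i) ((base γ).restrict A) := by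
  refine Integrable.mono' (integrable_const (Metric.diam K)) ?_ ?_
  · exact (continuous_coord_sub i).aestronglyMeasurable
  · refine ae_restrict_of_ae ?_
    filter_upwards [ae_base_dist_le hK hseg] with q hq
    rw [Real.norm_eq_abs]
    refine le_trans ?_ hq
    calc |q.2.1 i - q.2.2 i| = |(q.2.1 - q.2.2) i| := rfl
    _ ≤ ‖q.2.1 - q.2.2‖ := abs_coord_le _ _
    _ = dist q.2.1 q.2.2 := (dist_eq_norm _ _).symm

lemma setIntegral_wdir_coord [IsFiniteMeasure γ] (hK : IsCompact K)
    (hseg : ∀ᵐ p ∂γ, segment ℝ p.1 p.2 ⊆ K) (i : Fin 2) {s : Set E2} (hs : MeasurableSet s) :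
    haveI : IsFiniteMeasure (transportDensity γ) :=
      isFiniteMeasure_transportDensity (integrable_dist_of_ae_bound (ae_dist_le hK hseg))
    ∫ x in s, wdir γ x i ∂(transportDensity γ)
      = ∫ q in Tmap ⁻¹' s, (q.2.1 i - q.2.2 i) ∂(base γ) := by
  haveI : IsFiniteMeasure (transportDensity γ) :=
    isFiniteMeasure_transportDensity (integrable_dist_of_ae_bound (ae_dist_le hK hseg))
  haveI hP : IsFiniteMeasure (nuP γ i) := isFiniteMeasure_of_le _ (nuP_le γ i)
  haveI hM : IsFiniteMeasure (nuM γ i) := isFiniteMeasure_of_le _ (nuM_le γ i)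
  have hPle : nuP γ i ≪ transportDensity γ := (nuP_le γ i).absolutelyContinuous
  have hMle : nuM γ i ≪ transportDensity γ := (nuM_le γ i).absolutelyContinuous
  have h1 : ∫ x in s, wdir γ x i ∂(transportDensity γ)
      = ∫ x in s, ((nuP γ i).rnDeriv (transportDensity γ) x).toReal ∂(transportDensity γ)
      - ∫ x in s, ((nuM γ i).rnDeriv (transportDensity γ) x).toReal ∂(transportDensity γ) := by
    rw [← integral_sub]
    · rfl
    · exact (Measure.integrable_toReal_rnDeriv).restrict
    · exact (Measure.integrable_toReal_rnDeriv).restrict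
  rw [h1, Measure.setIntegral_toReal_rnDeriv hPle s, Measure.setIntegral_toReal_rnDeriv hMle s]
  have hA : MeasurableSet (Tmap ⁻¹' s) := measurable_Tmap hs
  have hnuP : nuP γ i s = ∫⁻ q in Tmap ⁻¹' s, ENNReal.ofReal (q.2.1 i - q.2.2 i) ∂(base γ) := by
    unfold nuP
    rw [Measure.map_apply measurable_Tmap hs, withDensity_apply _ hA]
  have hnuM : nuM γ i s = ∫⁻ q in Tmap ⁻¹' s, ENNReal.ofReal (q.2.2 i - q.2.1 i) ∂(base γ) := by
    unfold nuM
    rw [Measure.map_apply measurable_Tmap hs, withDensity_apply _ hA]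
  have h2 := integral_eq_lintegral_pos_part_sub_lintegral_neg_part
    (μ := (base γ).restrict (Tmap ⁻¹' s)) (integrable_coord_sub hK hseg i (Tmap ⁻¹' s))
  rw [measureReal_def, measureReal_def, hnuP, hnuM, h2]
  congr 2
  refine lintegral_congr fun q => ?_
  rw [neg_sub]
end Beckmann4

namespace Beckmann5
open Beckmann Beckmann2 Beckmann3 Beckmann4

variable {γ : Measure (E2 × E2)} {K : Set E2}

lemma continuous_dist2 : Continuous (fun q : ℝ × (E2 × E2) => dist q.2.1 q.2.2) := by
  fun_prop

lemma aesm_dist2 {μ : Measure (ℝ × (E2 × E2))} :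
    AEStronglyMeasurable (fun q : ℝ × (E2 × E2) => dist q.2.1 q.2.2) μ :=
  continuous_dist2.aestronglyMeasurable

lemma integrable_dist_base [IsFiniteMeasure γ] (hK : IsCompact K)
    (hseg : ∀ᵐ p ∂γ, segment ℝ p.1 p.2 ⊆ K) (A : Set (ℝ × (E2 × E2))) :
    Integrable (fun q : ℝ × (E2 × E2) => dist q.2.1 q.2.2) ((base γ).restrict A) := by
  refine Integrable.mono' (integrable_const (Metric.diam K)) aesm_dist2 ?_
  · refine ae_restrict_of_ae ?_
    filter_upwards [ae_base_dist_le hK hseg] with q hq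
    rwa [Real.norm_of_nonneg dist_nonneg]

lemma setIntegral_dist_base [IsFiniteMeasure γ] (hK : IsCompact K)
    (hseg : ∀ᵐ p ∂γ, segment ℝ p.1 p.2 ⊆ K) {s : Set E2} (hs : MeasurableSet s) :
    ∫ q in Tmap ⁻¹' s, dist q.2.1 q.2.2 ∂(base γ) = (transportDensity γ s).toReal := by
  rw [transportDensity_apply γ hs]
  have h := integral_eq_lintegral_of_nonneg_ae (μ := (base γ).restrict (Tmap ⁻¹' s))
    (f := fun q : ℝ × (E2 × E2) => dist q.2.1 q.2.2) (.of_forall fun q => dist_nonneg) aesm_dist2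
  rw [h]
  congr 1
  refine lintegral_congr fun q => ?_
  rw [edist_dist]

lemma integrable_inner_wdir [IsFiniteMeasure γ] (hK : IsCompact K)
    (hseg : ∀ᵐ p ∂γ, segment ℝ p.1 p.2 ⊆ K) (e : E2) :
    haveI : IsFiniteMeasure (transportDensity γ) :=
      isFiniteMeasure_transportDensity (integrable_dist_of_ae_bound (ae_dist_le hK hseg))
    Integrable (fun x => ⟪e, wdir γ x⟫) (transportDensity γ) := by
  haveI : IsFiniteMeasure (transportDensity γ) :=
    isFiniteMeasure_transportDensity (integrable_dist_of_ae_bound (ae_dist_le hK hseg))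
  haveI hP : ∀ i, IsFiniteMeasure (nuP γ i) := fun i => isFiniteMeasure_of_le _ (nuP_le γ i)
  haveI hM : ∀ i, IsFiniteMeasure (nuM γ i) := fun i => isFiniteMeasure_of_le _ (nuM_le γ i)
  simp_rw [inner_eq_sum]
  refine integrable_finset_sum _ fun i _ => ?_
  exact ((Measure.integrable_toReal_rnDeriv (μ := nuP γ i) (ν := transportDensity γ)).sub
    (Measure.integrable_toReal_rnDeriv (μ := nuM γ i) (ν := transportDensity γ))).const_mul _

lemma ae_inner_wdir_le [IsFiniteMeasure γ] (hK : IsCompact K)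
    (hseg : ∀ᵐ p ∂γ, segment ℝ p.1 p.2 ⊆ K) (e : E2) :
    ∀ᵐ x ∂(transportDensity γ), ⟪e, wdir γ x⟫ ≤ ‖e‖ := by
  haveI : IsFiniteMeasure (transportDensity γ) :=
    isFiniteMeasure_transportDensity (integrable_dist_of_ae_bound (ae_dist_le hK hseg))
  haveI hP : ∀ i, IsFiniteMeasure (nuP γ i) := fun i => isFiniteMeasure_of_le _ (nuP_le γ i)
  haveI hM : ∀ i, IsFiniteMeasure (nuM γ i) := fun i => isFiniteMeasure_of_le _ (nuM_le γ i)
  refine ae_le_of_forall_setIntegral_le (integrable_inner_wdir hK hseg e)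
    (integrable_const _) (fun s hs _ => ?_)
  have hstep1 : ∫ x in s, ⟪e, wdir γ x⟫ ∂(transportDensity γ)
      = ∑ i, e i * ∫ q in Tmap ⁻¹' s, (q.2.1 i - q.2.2 i) ∂(base γ) := by
    simp_rw [inner_eq_sum]
    rw [integral_finset_sum]
    · refine Finset.sum_congr rfl fun i _ => ?_
      rw [integral_const_mul, setIntegral_wdir_coord hK hseg i hs]
    · intro i _
      exact (((Measure.integrable_toReal_rnDeriv (μ := nuP γ i) (ν := transportDensity γ)).sub
        (Measure.integrable_toReal_rnDeriv (μ := nuM γ i) (ν := transportDensity γ))).const_mul _).restrict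
  have hstep2 : ∑ i, e i * ∫ q in Tmap ⁻¹' s, (q.2.1 i - q.2.2 i) ∂(base γ)
      = ∫ q in Tmap ⁻¹' s, ⟪e, q.2.1 - q.2.2⟫ ∂(base γ) := by
    simp_rw [← integral_const_mul]
    rw [← integral_finset_sum]
    · refine integral_congr_ae (.of_forall fun q => ?_)
      show ∑ i, e i * (q.2.1 i - q.2.2 i) = ⟪e, q.2.1 - q.2.2⟫
      rw [inner_eq_sum]
      rfl
    · intro i _
      exact (integrable_coord_sub hK hseg i _).const_mul _
  have hstep3 : ∫ q in Tmap ⁻¹' s, ⟪e, q.2.1 - q.2.2⟫ ∂(base γ)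
      ≤ ∫ q in Tmap ⁻¹' s, ‖e‖ * dist q.2.1 q.2.2 ∂(base γ) := by
    refine integral_mono_ae ?_ ((integrable_dist_base hK hseg _).const_mul _)
      (.of_forall fun q => ?_)
    · -- integrability of inner
      have : (fun q : ℝ × (E2 × E2) => ⟪e, q.2.1 - q.2.2⟫)
          = fun q => ∑ i, e i * (q.2.1 i - q.2.2 i) := by
        funext q
        rw [inner_eq_sum]
        rfl
      rw [this]
      exact integrable_finset_sum _ fun i _ => (integrable_coord_sub hK hseg i _).const_mul _
    · show ⟪e, q.2.1 - q.2.2⟫ ≤ ‖e‖ * dist q.2.1 q.2.2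
      refine le_trans (real_inner_le_norm _ _) (le_of_eq ?_)
      rw [dist_eq_norm]
  rw [hstep1, hstep2]
  refine le_trans hstep3 ?_
  rw [integral_const_mul, setIntegral_dist_base hK hseg hs, setIntegral_const, smul_eq_mul,
    mul_comm, measureReal_def]

lemma ae_norm_wdir_le [IsFiniteMeasure γ] (hK : IsCompact K)
    (hseg : ∀ᵐ p ∂γ, segment ℝ p.1 p.2 ⊆ K) :
    ∀ᵐ x ∂(transportDensity γ), ‖wdir γ x‖ ≤ 1 := by
  obtain ⟨D, hDc, hDd⟩ := TopologicalSpace.exists_countable_dense E2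
  have hae : ∀ᵐ x ∂(transportDensity γ), ∀ e ∈ D, ⟪e, wdir γ x⟫ ≤ ‖e‖ :=
    (ae_ball_iff hDc).mpr fun e _ => ae_inner_wdir_le hK hseg e
  filter_upwards [hae] with x hx
  have hall : ∀ e : E2, ⟪e, wdir γ x⟫ ≤ ‖e‖ := by
    have hclosed : IsClosed {e : E2 | ⟪e, wdir γ x⟫ ≤ ‖e‖} :=
      isClosed_le (Continuous.inner continuous_id continuous_const) continuous_norm
    have hsub : Set.univ ⊆ {e : E2 | ⟪e, wdir γ x⟫ ≤ ‖e‖} := by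
      rw [← hclosed.closure_eq]
      refine le_trans ?_ (closure_mono fun e he => hx e he)
      rw [hDd.closure_eq]
    exact fun e => hsub (Set.mem_univ e)
  have h2 := hall (wdir γ x)
  rw [real_inner_self_eq_norm_mul_norm] at h2
  nlinarith [norm_nonneg (wdir γ x)]

end Beckmann5

namespace Beckmann6
open Beckmann Beckmann2 Beckmann3 Beckmann4 Beckmann5

variable {γ : Measure (E2 × E2)} {K : Set E2}

lemma toNNReal_sub_toNNReal_neg (a : ℝ) :
    (Real.toNNReal a : ℝ) - (Real.toNNReal (-a) : ℝ) = a := by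
  rcases le_total 0 a with h | h
  · rw [Real.coe_toNNReal a h, Real.toNNReal_of_nonpos (by linarith)]
    simp
  · rw [Real.coe_toNNReal (-a) (by linarith), Real.toNNReal_of_nonpos h]
    simp

lemma integral_coord_wdir [IsFiniteMeasure γ] (hK : IsCompact K)
    (hseg : ∀ᵐ p ∂γ, segment ℝ p.1 p.2 ⊆ K)
    (b : E2 → ℝ) (hb : Continuous b) {M : ℝ} (hbM : ∀ x ∈ K, |b x| ≤ M) (i : Fin 2) :
    ∫ x, b x * wdir γ x i ∂(transportDensity γ)
      = ∫ q, (q.2.1 i - q.2.2 i) * b (Tmap q) ∂(base γ) := by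
  haveI : IsFiniteMeasure (transportDensity γ) :=
    isFiniteMeasure_transportDensity (integrable_dist_of_ae_bound (ae_dist_le hK hseg))
  haveI hPf : IsFiniteMeasure (nuP γ i) := isFiniteMeasure_of_le _ (nuP_le γ i)
  haveI hMf : IsFiniteMeasure (nuM γ i) := isFiniteMeasure_of_le _ (nuM_le γ i)
  have hPle : nuP γ i ≪ transportDensity γ := (nuP_le γ i).absolutelyContinuous
  have hMle : nuM γ i ≪ transportDensity γ := (nuM_le γ i).absolutelyContinuous
  have haeK : ∀ᵐ x ∂(transportDensity γ), x ∈ K := by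
    rw [ae_iff]
    have : {x : E2 | ¬ x ∈ K} = Kᶜ := rfl
    rw [this]
    exact transportDensity_compl_K hK.isClosed hseg
  -- integrability of b times rnDeriv parts
  have hIntP : Integrable (fun x =>
      b x * ((nuP γ i).rnDeriv (transportDensity γ) x).toReal) (transportDensity γ) := by
    refine Integrable.mono' ((Measure.integrable_toReal_rnDeriv (μ := nuP γ i)
      (ν := transportDensity γ)).const_mul M) ?_ ?_
    · exact hb.aestronglyMeasurable.mul
        (Measure.measurable_rnDeriv _ _).ennreal_toReal.aestronglyMeasurable
    · filter_upwards [haeK] with x hx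
      rw [Real.norm_eq_abs, abs_mul, abs_of_nonneg ENNReal.toReal_nonneg]
      exact mul_le_mul_of_nonneg_right (hbM x hx) ENNReal.toReal_nonneg
  have hIntM : Integrable (fun x =>
      b x * ((nuM γ i).rnDeriv (transportDensity γ) x).toReal) (transportDensity γ) := by
    refine Integrable.mono' ((Measure.integrable_toReal_rnDeriv (μ := nuM γ i)
      (ν := transportDensity γ)).const_mul M) ?_ ?_
    · exact hb.aestronglyMeasurable.mul
        (Measure.measurable_rnDeriv _ _).ennreal_toReal.aestronglyMeasurable
    · filter_upwards [haeK] with x hx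
      rw [Real.norm_eq_abs, abs_mul, abs_of_nonneg ENNReal.toReal_nonneg]
      exact mul_le_mul_of_nonneg_right (hbM x hx) ENNReal.toReal_nonneg
  have h1 : ∫ x, b x * wdir γ x i ∂(transportDensity γ)
      = ∫ x, b x * ((nuP γ i).rnDeriv (transportDensity γ) x).toReal ∂(transportDensity γ)
      - ∫ x, b x * ((nuM γ i).rnDeriv (transportDensity γ) x).toReal ∂(transportDensity γ) := by
    rw [← integral_sub hIntP hIntM]
    refine integral_congr_ae (.of_forall fun x => ?_)
    show b x * wdir γ x i = _
    have : wdir γ x i = ((nuP γ i).rnDeriv (transportDensity γ) x).toReal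
        - ((nuM γ i).rnDeriv (transportDensity γ) x).toReal := rfl
    rw [this, mul_sub]
  have h2P : ∫ x, b x * ((nuP γ i).rnDeriv (transportDensity γ) x).toReal ∂(transportDensity γ)
      = ∫ x, b x ∂(nuP γ i) := by
    haveI : (nuP γ i).HaveLebesgueDecomposition (transportDensity γ) :=
      Measure.haveLebesgueDecomposition_of_sigmaFinite ..
    have h := MeasureTheory.integral_rnDeriv_smul (μ := nuP γ i) (ν := transportDensity γ) hPle (f := b)
    rw [← h]
    refine integral_congr_ae (.of_forall fun x => ?_)
    simp [smul_eq_mul, mul_comm]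
  have h2M : ∫ x, b x * ((nuM γ i).rnDeriv (transportDensity γ) x).toReal ∂(transportDensity γ)
      = ∫ x, b x ∂(nuM γ i) := by
    haveI : (nuM γ i).HaveLebesgueDecomposition (transportDensity γ) :=
      Measure.haveLebesgueDecomposition_of_sigmaFinite ..
    have h := MeasureTheory.integral_rnDeriv_smul (μ := nuM γ i) (ν := transportDensity γ) hMle (f := b)
    rw [← h]
    refine integral_congr_ae (.of_forall fun x => ?_)
    simp [smul_eq_mul, mul_comm]
  have h3P : ∫ x, b x ∂(nuP γ i)
      = ∫ q, (Real.toNNReal (q.2.1 i - q.2.2 i) : ℝ) * b (Tmap q) ∂(base γ) := by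
    unfold nuP
    rw [integral_map measurable_Tmap.aemeasurable hb.aestronglyMeasurable]
    have hcast : ((base γ).withDensity fun q => ENNReal.ofReal (q.2.1 i - q.2.2 i))
        = ((base γ).withDensity fun q =>
            ((Real.toNNReal (q.2.1 i - q.2.2 i) : ℝ≥0) : ℝ≥0∞)) := rfl
    have hmeasP : Measurable fun q : ℝ × (E2 × E2) => Real.toNNReal (q.2.1 i - q.2.2 i) :=
      measurable_real_toNNReal.comp (continuous_coord_sub i).measurable
    rw [hcast, integral_withDensity_eq_integral_smul hmeasP]
    refine integral_congr_ae (.of_forall fun q => ?_)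
    simp [NNReal.smul_def]
  have h3M : ∫ x, b x ∂(nuM γ i)
      = ∫ q, (Real.toNNReal (q.2.2 i - q.2.1 i) : ℝ) * b (Tmap q) ∂(base γ) := by
    unfold nuM
    rw [integral_map measurable_Tmap.aemeasurable hb.aestronglyMeasurable]
    have hcast : ((base γ).withDensity fun q => ENNReal.ofReal (q.2.2 i - q.2.1 i))
        = ((base γ).withDensity fun q =>
            ((Real.toNNReal (q.2.2 i - q.2.1 i) : ℝ≥0) : ℝ≥0∞)) := rfl
    have hmeas : Measurable (fun q : ℝ × (E2 × E2) => Real.toNNReal (q.2.2 i - q.2.1 i)) := by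
      refine measurable_real_toNNReal.comp ?_
      have : Continuous (fun q : ℝ × (E2 × E2) => q.2.2 i - q.2.1 i) :=
        (((EuclideanSpace.proj i : E2 →L[ℝ] ℝ)).continuous.comp
          (continuous_snd.comp continuous_snd)).sub
          (((EuclideanSpace.proj i : E2 →L[ℝ] ℝ)).continuous.comp
          (continuous_fst.comp continuous_snd))
      exact this.measurable
    rw [hcast, integral_withDensity_eq_integral_smul hmeas]
    refine integral_congr_ae (.of_forall fun q => ?_)
    simp [NNReal.smul_def]
  -- integrability on base for the difference step
  have hbase_boundP : Integrable
      (fun q => (Real.toNNReal (q.2.1 i - q.2.2 i) : ℝ) * b (Tmap q)) (base γ) := by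
    refine Integrable.mono' (integrable_const (Metric.diam K * |M|)) ?_ ?_
    · exact ((measurable_real_toNNReal.comp
        (continuous_coord_sub i).measurable).coe_nnreal_real.aestronglyMeasurable).mul
        ((hb.comp continuous_Tmap).aestronglyMeasurable)
    · filter_upwards [ae_base_dist_le hK hseg, ae_base_mem hK.isClosed hseg] with q hq hmem
      rw [Real.norm_eq_abs, abs_mul]
      refine mul_le_mul ?_ ?_ (abs_nonneg _) (Metric.diam_nonneg)
      · rw [abs_of_nonneg NNReal.zero_le_coe]
        calc (Real.toNNReal (q.2.1 i - q.2.2 i) : ℝ) ≤ |q.2.1 i - q.2.2 i| := by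
              rw [Real.coe_toNNReal']
              rcases le_total 0 (q.2.1 i - q.2.2 i) with h | h
              · rw [max_eq_left h]; exact le_abs_self _
              · rw [max_eq_right h]; exact abs_nonneg _
        _ = |(q.2.1 - q.2.2) i| := rfl
        _ ≤ ‖q.2.1 - q.2.2‖ := abs_coord_le _ _
        _ = dist q.2.1 q.2.2 := (dist_eq_norm _ _).symm
        _ ≤ Metric.diam K := hq
      · exact le_trans (hbM _ hmem.1) (le_abs_self M)
  have hbase_boundM : Integrable
      (fun q => (Real.toNNReal (q.2.2 i - q.2.1 i) : ℝ) * b (Tmap q)) (base γ) := by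
    refine Integrable.mono' (integrable_const (Metric.diam K * |M|)) ?_ ?_
    · refine (((measurable_real_toNNReal.comp ?_).coe_nnreal_real.aestronglyMeasurable).mul
        ((hb.comp continuous_Tmap).aestronglyMeasurable))
      have : Continuous (fun q : ℝ × (E2 × E2) => q.2.2 i - q.2.1 i) :=
        (((EuclideanSpace.proj i : E2 →L[ℝ] ℝ)).continuous.comp
          (continuous_snd.comp continuous_snd)).sub
          (((EuclideanSpace.proj i : E2 →L[ℝ] ℝ)).continuous.comp
          (continuous_fst.comp continuous_snd))
      exact this.measurable
    · filter_upwards [ae_base_dist_le hK hseg, ae_base_mem hK.isClosed hseg] with q hq hmem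
      rw [Real.norm_eq_abs, abs_mul]
      refine mul_le_mul ?_ ?_ (abs_nonneg _) (Metric.diam_nonneg)
      · rw [abs_of_nonneg NNReal.zero_le_coe]
        calc (Real.toNNReal (q.2.2 i - q.2.1 i) : ℝ) ≤ |q.2.2 i - q.2.1 i| := by
              rw [Real.coe_toNNReal']
              rcases le_total 0 (q.2.2 i - q.2.1 i) with h | h
              · rw [max_eq_left h]; exact le_abs_self _
              · rw [max_eq_right h]; exact abs_nonneg _
        _ = |(q.2.2 - q.2.1) i| := rfl
        _ ≤ ‖q.2.2 - q.2.1‖ := abs_coord_le _ _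
        _ = dist q.2.1 q.2.2 := by rw [← dist_eq_norm, dist_comm]
        _ ≤ Metric.diam K := hq
      · exact le_trans (hbM _ hmem.1) (le_abs_self M)
  rw [h1, h2P, h2M, h3P, h3M, ← integral_sub hbase_boundP hbase_boundM]
  refine integral_congr_ae (.of_forall fun q => ?_)
  show (Real.toNNReal (q.2.1 i - q.2.2 i) : ℝ) * b (Tmap q)
      - (Real.toNNReal (q.2.2 i - q.2.1 i) : ℝ) * b (Tmap q)
      = (q.2.1 i - q.2.2 i) * b (Tmap q)
  rw [← sub_mul]
  congr 1
  have : q.2.2 i - q.2.1 i = -(q.2.1 i - q.2.2 i) := by ring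
  rw [this, toNNReal_sub_toNNReal_neg]

end Beckmann6

namespace Beckmann7
open Beckmann Beckmann2 Beckmann3 Beckmann4 Beckmann5 Beckmann6

variable {γ : Measure (E2 × E2)} {K : Set E2}

lemma inner_gradient (ψ : E2 → ℝ) (x v : E2) : ⟪gradient ψ x, v⟫ = fderiv ℝ ψ x v :=
  InnerProductSpace.toDual_symm_apply

lemma continuous_gradient {ψ : E2 → ℝ} (hψ : ContDiff ℝ 1 ψ) : Continuous (gradient ψ) :=
  (InnerProductSpace.toDual ℝ E2).symm.continuous.comp (hψ.continuous_fderiv one_ne_zero)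

lemma integrable_coord_mul_base [IsFiniteMeasure γ] (hK : IsCompact K)
    (hseg : ∀ᵐ p ∂γ, segment ℝ p.1 p.2 ⊆ K)
    (b : E2 → ℝ) (hb : Continuous b) {M : ℝ} (hbM : ∀ x ∈ K, |b x| ≤ M) (i : Fin 2) :
    Integrable (fun q : ℝ × (E2 × E2) => (q.2.1 i - q.2.2 i) * b (Tmap q)) (base γ) := by
  refine Integrable.mono' (integrable_const (Metric.diam K * |M|)) ?_ ?_
  · exact (continuous_coord_sub i).aestronglyMeasurable.mul
      ((hb.comp continuous_Tmap).aestronglyMeasurable)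
  · filter_upwards [ae_base_dist_le hK hseg, ae_base_mem hK.isClosed hseg] with q hq hmem
    rw [Real.norm_eq_abs, abs_mul]
    refine mul_le_mul ?_ (le_trans (hbM _ hmem.1) (le_abs_self M)) (abs_nonneg _)
      (Metric.diam_nonneg)
    calc |q.2.1 i - q.2.2 i| = |(q.2.1 - q.2.2) i| := rfl
    _ ≤ ‖q.2.1 - q.2.2‖ := abs_coord_le _ _
    _ = dist q.2.1 q.2.2 := (dist_eq_norm _ _).symm
    _ ≤ Metric.diam K := hq

lemma integrable_mul_wdir [IsFiniteMeasure γ] (hK : IsCompact K)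
    (hseg : ∀ᵐ p ∂γ, segment ℝ p.1 p.2 ⊆ K)
    (b : E2 → ℝ) (hb : Continuous b) {M : ℝ} (hbM : ∀ x ∈ K, |b x| ≤ M) (i : Fin 2) :
    Integrable (fun x => b x * wdir γ x i) (transportDensity γ) := by
  haveI : IsFiniteMeasure (transportDensity γ) :=
    isFiniteMeasure_transportDensity (integrable_dist_of_ae_bound (ae_dist_le hK hseg))
  haveI hPf : IsFiniteMeasure (nuP γ i) := isFiniteMeasure_of_le _ (nuP_le γ i)
  haveI hMf : IsFiniteMeasure (nuM γ i) := isFiniteMeasure_of_le _ (nuM_le γ i)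
  have haeK : ∀ᵐ x ∂(transportDensity γ), x ∈ K := by
    rw [ae_iff]
    exact transportDensity_compl_K hK.isClosed hseg
  refine Integrable.mono'
    (((Measure.integrable_toReal_rnDeriv (μ := nuP γ i) (ν := transportDensity γ)).add
      (Measure.integrable_toReal_rnDeriv (μ := nuM γ i) (ν := transportDensity γ))).const_mul
      |M|) ?_ ?_
  · refine hb.aestronglyMeasurable.mul ?_
    exact ((Measure.measurable_rnDeriv _ _).ennreal_toReal.sub
      (Measure.measurable_rnDeriv _ _).ennreal_toReal).aestronglyMeasurable
  · filter_upwards [haeK] with x hx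
    rw [Real.norm_eq_abs, abs_mul]
    have h1 : |b x| ≤ |M| := le_trans (hbM x hx) (le_abs_self M)
    have h2 : |wdir γ x i| ≤ ((nuP γ i).rnDeriv (transportDensity γ) x).toReal
        + ((nuM γ i).rnDeriv (transportDensity γ) x).toReal := by
      have : wdir γ x i = ((nuP γ i).rnDeriv (transportDensity γ) x).toReal
          - ((nuM γ i).rnDeriv (transportDensity γ) x).toReal := rfl
      rw [this]
      refine le_trans (abs_sub _ _) ?_
      rw [abs_of_nonneg ENNReal.toReal_nonneg, abs_of_nonneg ENNReal.toReal_nonneg]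
    exact mul_le_mul h1 h2 (abs_nonneg _) (abs_nonneg _)

lemma integral_inner_wdir [IsFiniteMeasure γ] (hK : IsCompact K)
    (hseg : ∀ᵐ p ∂γ, segment ℝ p.1 p.2 ⊆ K)
    (ψ : E2 → ℝ) (hψ : ContDiff ℝ 1 ψ) :
    ∫ x, ⟪gradient ψ x, wdir γ x⟫ ∂(transportDensity γ)
      = ∫ q, ⟪gradient ψ (Tmap q), q.2.1 - q.2.2⟫ ∂(base γ) := by
  haveI : IsFiniteMeasure (transportDensity γ) :=
    isFiniteMeasure_transportDensity (integrable_dist_of_ae_bound (ae_dist_le hK hseg))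
  obtain ⟨M, hM⟩ := hK.exists_bound_of_continuousOn (continuous_gradient hψ).continuousOn
  have hbc : ∀ i : Fin 2, Continuous (fun x => gradient ψ x i) := fun i =>
    ((EuclideanSpace.proj i : E2 →L[ℝ] ℝ)).continuous.comp (continuous_gradient hψ)
  have hbM : ∀ i : Fin 2, ∀ x ∈ K, |gradient ψ x i| ≤ M := fun i x hx =>
    le_trans (abs_coord_le _ _) (hM x hx)
  have hL : ∫ x, ⟪gradient ψ x, wdir γ x⟫ ∂(transportDensity γ)
      = ∑ i, ∫ x, gradient ψ x i * wdir γ x i ∂(transportDensity γ) := by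
    simp_rw [inner_eq_sum]
    rw [integral_finset_sum]
    exact fun i _ => integrable_mul_wdir hK hseg _ (hbc i) (hbM i) i
  have hR : ∫ q, ⟪gradient ψ (Tmap q), q.2.1 - q.2.2⟫ ∂(base γ)
      = ∑ i, ∫ q, (q.2.1 i - q.2.2 i) * gradient ψ (Tmap q) i ∂(base γ) := by
    have : (fun q : ℝ × (E2 × E2) => ⟪gradient ψ (Tmap q), q.2.1 - q.2.2⟫)
        = fun q => ∑ i, (q.2.1 i - q.2.2 i) * gradient ψ (Tmap q) i := by
      funext q
      rw [inner_eq_sum]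
      refine Finset.sum_congr rfl fun i _ => ?_
      show gradient ψ (Tmap q) i * (q.2.1 - q.2.2) i = _
      have : (q.2.1 - q.2.2) i = q.2.1 i - q.2.2 i := rfl
      rw [this, mul_comm]
    rw [this, integral_finset_sum]
    exact fun i _ => integrable_coord_mul_base hK hseg _ (hbc i) (hbM i) i
  rw [hL, hR]
  exact Finset.sum_congr rfl fun i _ =>
    integral_coord_wdir hK hseg _ (hbc i) (hbM i) i

lemma ftc_inner {ψ : E2 → ℝ} (hψ : ContDiff ℝ 1 ψ) (x y : E2) :
    ∫ t in Set.Icc (0:ℝ) 1, ⟪gradient ψ ((1-t) • x + t • y), x - y⟫ = ψ x - ψ y := by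
  have hceq : ∀ t : ℝ, (1-t) • x + t • y = x + t • (y - x) := fun t => by
    rw [sub_smul, one_smul, smul_sub]
    abel
  have hderiv : ∀ t ∈ Set.uIcc (0:ℝ) 1,
      HasDerivAt (fun t : ℝ => ψ ((1-t) • x + t • y))
        (⟪gradient ψ ((1-t) • x + t • y), y - x⟫) t := by
    intro t _
    have hc : HasDerivAt (fun t : ℝ => (1-t) • x + t • y) (y - x) t := by
      have h1 : HasDerivAt (fun t : ℝ => x + t • (y - x)) ((1:ℝ) • (y - x)) t :=
        ((hasDerivAt_id t).smul_const (y - x)).const_add x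
      rw [one_smul] at h1
      have : (fun t : ℝ => (1-t) • x + t • y) = fun t : ℝ => x + t • (y - x) := funext hceq
      rw [this]
      exact h1
    have hd : HasFDerivAt ψ (fderiv ℝ ψ ((1-t) • x + t • y)) ((1-t) • x + t • y) :=
      ((hψ.differentiable one_ne_zero) _).hasFDerivAt
    have := hd.comp_hasDerivAt t hc
    rw [inner_gradient]
    exact this
  have hcont : Continuous (fun t : ℝ => ⟪gradient ψ ((1-t) • x + t • y), y - x⟫) := by
    refine Continuous.inner ?_ continuous_const
    exact (continuous_gradient hψ).comp
      (((continuous_const.sub continuous_id).smul continuous_const).add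
        (continuous_id.smul continuous_const))
  have hFTC := intervalIntegral.integral_eq_sub_of_hasDerivAt hderiv
    (hcont.intervalIntegrable 0 1)
  have hval : ψ ((1-(1:ℝ)) • x + (1:ℝ) • y) = ψ y := by norm_num
  have hval0 : ψ ((1-(0:ℝ)) • x + (0:ℝ) • y) = ψ x := by norm_num
  rw [MeasureTheory.integral_Icc_eq_integral_Ioc, ← intervalIntegral.integral_of_le zero_le_one]
  have hneg : (fun t : ℝ => ⟪gradient ψ ((1-t) • x + t • y), x - y⟫)
      = fun t : ℝ => -⟪gradient ψ ((1-t) • x + t • y), y - x⟫ := by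
    funext t
    rw [← inner_neg_right, neg_sub]
  rw [hneg, intervalIntegral.integral_neg, hFTC, hval, hval0]
  ring

end Beckmann7

namespace Beckmann8
open Beckmann Beckmann2 Beckmann3 Beckmann4 Beckmann5 Beckmann6 Beckmann7

variable {γ : Measure (E2 × E2)} {K : Set E2}

lemma integral_base_eq [IsFiniteMeasure γ] (hK : IsCompact K)
    (hseg : ∀ᵐ p ∂γ, segment ℝ p.1 p.2 ⊆ K)
    (ψ : E2 → ℝ) (hψ : ContDiff ℝ 1 ψ) :
    ∫ q, ⟪gradient ψ (Tmap q), q.2.1 - q.2.2⟫ ∂(base γ)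
      = ∫ p, (ψ p.1 - ψ p.2) ∂γ := by
  obtain ⟨M, hM⟩ := hK.exists_bound_of_continuousOn (continuous_gradient hψ).continuousOn
  have hFc : Continuous (fun q : ℝ × (E2 × E2) => ⟪gradient ψ (Tmap q), q.2.1 - q.2.2⟫) := by
    refine Continuous.inner ((continuous_gradient hψ).comp continuous_Tmap) ?_
    exact (continuous_fst.comp continuous_snd).sub (continuous_snd.comp continuous_snd)
  have hFi : Integrable (fun q : ℝ × (E2 × E2) => ⟪gradient ψ (Tmap q), q.2.1 - q.2.2⟫)
      (base γ) := by
    refine Integrable.mono' (integrable_const (M * Metric.diam K)) hFc.aestronglyMeasurable ?_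
    filter_upwards [ae_base_dist_le hK hseg, ae_base_mem hK.isClosed hseg] with q hq hmem
    rw [Real.norm_eq_abs]
    refine le_trans (abs_real_inner_le_norm _ _) ?_
    have h1 : ‖gradient ψ (Tmap q)‖ ≤ M := hM _ hmem.1
    have h2 : ‖q.2.1 - q.2.2‖ ≤ Metric.diam K := by
      rw [← dist_eq_norm]
      exact hq
    exact mul_le_mul h1 h2 (norm_nonneg _) (le_trans (norm_nonneg _) h1)
  have hswap := MeasureTheory.integral_prod_symm
    (μ := (volume : Measure ℝ).restrict (Set.Icc 0 1)) (ν := γ)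
    (fun q : ℝ × (E2 × E2) => ⟪gradient ψ (Tmap q), q.2.1 - q.2.2⟫) hFi
  rw [show base γ = ((volume : Measure ℝ).restrict (Set.Icc 0 1)).prod γ from rfl, hswap]
  refine integral_congr_ae (.of_forall fun p => ?_)
  exact ftc_inner hψ p.1 p.2

lemma integral_marginals [IsFiniteMeasure γ] (hK : IsCompact K)
    (hseg : ∀ᵐ p ∂γ, segment ℝ p.1 p.2 ⊆ K)
    {fp fm : Measure E2} (hγ1 : γ.map Prod.fst = fp) (hγ2 : γ.map Prod.snd = fm)
    (ψ : E2 → ℝ) (hψc : Continuous ψ) :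
    ∫ p, (ψ p.1 - ψ p.2) ∂γ = ∫ x, ψ x ∂fp - ∫ x, ψ x ∂fm := by
  obtain ⟨M, hM⟩ := hK.exists_bound_of_continuousOn hψc.continuousOn
  have haeK : ∀ᵐ p ∂γ, p.1 ∈ K ∧ p.2 ∈ K := by
    filter_upwards [hseg] with p hp
    exact ⟨hp (left_mem_segment ℝ _ _), hp (right_mem_segment ℝ _ _)⟩
  have hint1 : Integrable (fun p : E2 × E2 => ψ p.1) γ := by
    refine Integrable.mono' (integrable_const M) (hψc.comp continuous_fst).aestronglyMeasurable ?_
    filter_upwards [haeK] with p hp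
    exact hM _ hp.1
  have hint2 : Integrable (fun p : E2 × E2 => ψ p.2) γ := by
    refine Integrable.mono' (integrable_const M) (hψc.comp continuous_snd).aestronglyMeasurable ?_
    filter_upwards [haeK] with p hp
    exact hM _ hp.2
  rw [integral_sub hint1 hint2, ← hγ1, ← hγ2,
    integral_map measurable_fst.aemeasurable hψc.aestronglyMeasurable,
    integral_map measurable_snd.aemeasurable hψc.aestronglyMeasurable]

lemma divergence_identity [IsFiniteMeasure γ] (hK : IsCompact K)
    (hseg : ∀ᵐ p ∂γ, segment ℝ p.1 p.2 ⊆ K)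
    {fp fm : Measure E2} (hγ1 : γ.map Prod.fst = fp) (hγ2 : γ.map Prod.snd = fm)
    (ψ : E2 → ℝ) (hψ : ContDiff ℝ 1 ψ) :
    ∫ x, ⟪gradient ψ x, wdir γ x⟫ ∂(transportDensity γ)
      = ∫ x, ψ x ∂fp - ∫ x, ψ x ∂fm := by
  rw [integral_inner_wdir hK hseg ψ hψ, integral_base_eq hK hseg ψ hψ,
    integral_marginals hK hseg hγ1 hγ2 ψ hψ.continuous]

end Beckmann8

namespace Beckmann9
open Beckmann Beckmann2 Beckmann3 Beckmann4 Beckmann5 Beckmann6 Beckmann7 Beckmann8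
open scoped Convolution

variable {K : Set E2}

lemma le_add_eps {a b : ℝ} (h : ∀ ε > 0, a ≤ b + ε) : a ≤ b := by
  by_contra hc
  push_neg at hc
  have := h ((a - b)/2) (by linarith)
  linarith

lemma integrable_of_compact_support {μ : Measure E2} [IsFiniteMeasure μ] (hμ : μ Kᶜ = 0)
    (hK : IsCompact K) {f : E2 → ℝ} (hf : Continuous f) : Integrable f μ := by
  obtain ⟨M, hM⟩ := hK.exists_bound_of_continuousOn hf.continuousOn
  have haeK : ∀ᵐ x ∂μ, x ∈ K := by
    rw [ae_iff]
    exact hμ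
  refine Integrable.mono' (integrable_const M) hf.aestronglyMeasurable ?_
  filter_upwards [haeK] with x hx
  exact hM x hx

lemma lipschitz_bump_convolution (k : ContDiffBump (0 : E2)) {g : E2 → ℝ}
    (hg : LipschitzWith 1 g) :
    LipschitzWith 1 (k.normed volume ⋆[ContinuousLinearMap.lsmul ℝ ℝ, volume] g) := by
  have hex : ConvolutionExists (k.normed volume) g (ContinuousLinearMap.lsmul ℝ ℝ) volume :=
    HasCompactSupport.convolutionExists_left _ k.hasCompactSupport_normed k.continuous_normed
      hg.continuous.locallyIntegrable
  refine LipschitzWith.of_dist_le_mul fun a b => ?_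
  rw [NNReal.coe_one, one_mul]
  have hdef : ∀ x : E2, (k.normed volume ⋆[ContinuousLinearMap.lsmul ℝ ℝ, volume] g) x
      = ∫ t, k.normed volume t * g (x - t) := fun x => rfl
  have hA : Integrable (fun t => k.normed volume t * g (a - t)) volume := (hex a).integrable
  have hB : Integrable (fun t => k.normed volume t * g (b - t)) volume := (hex b).integrable
  rw [Real.dist_eq, hdef a, hdef b, ← integral_sub hA hB]
  have hbound : ∀ t : E2, ‖k.normed volume t * g (a - t) - k.normed volume t * g (b - t)‖
      ≤ k.normed volume t * dist a b := by
    intro t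
    rw [← mul_sub, Real.norm_eq_abs, abs_mul, abs_of_nonneg (k.nonneg_normed t)]
    refine mul_le_mul_of_nonneg_left ?_ (k.nonneg_normed t)
    have h1 := hg.dist_le_mul (a - t) (b - t)
    rw [NNReal.coe_one, one_mul, dist_sub_right] at h1
    rw [← Real.dist_eq]
    exact h1
  refine le_trans (norm_integral_le_of_norm_le ((k.integrable_normed).mul_const (dist a b))
    (.of_forall hbound)) ?_
  rw [integral_mul_const, k.integral_normed]
  simp

lemma norm_gradient_le_of_lipschitz {ψ : E2 → ℝ} (hψ : LipschitzWith 1 ψ) (x : E2) :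
    ‖gradient ψ x‖ ≤ 1 := by
  have h := norm_fderiv_le_of_lipschitz ℝ (x₀ := x) hψ
  have hg : ‖gradient ψ x‖ = ‖fderiv ℝ ψ x‖ := by
    show ‖(InnerProductSpace.toDual ℝ E2).symm (fderiv ℝ ψ x)‖ = _
    exact LinearIsometryEquiv.norm_map _ _
  rw [hg]
  simpa using h

lemma minimality (hK : IsCompact K)
    (fp fm : Measure E2) [IsFiniteMeasure fp] [IsFiniteMeasure fm]
    (hfpK : fp Kᶜ = 0) (hfmK : fm Kᶜ = 0)
    (φg : E2 → ℝ) (hφg : LipschitzWith 1 φg)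
    (μ : Measure E2) (hμfin : IsFiniteMeasure μ) (hμK : μ Kᶜ = 0)
    (w : E2 → E2) (hw : ∀ᵐ x ∂μ, ‖w x‖ ≤ 1)
    (hdiv : ∀ ψ : E2 → ℝ, ContDiff ℝ 1 ψ →
      ∫ x, ⟪gradient ψ x, w x⟫ ∂μ = ∫ x, ψ x ∂fp - ∫ x, ψ x ∂fm) :
    ∫ x, φg x ∂fp - ∫ x, φg x ∂fm ≤ (μ Set.univ).toReal := by
  haveI := hμfin
  refine le_add_eps fun ε' hε' => ?_
  set C : ℝ := (fp Set.univ).toReal + (fm Set.univ).toReal with hC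
  have hC0 : 0 ≤ C := by positivity
  set ε : ℝ := ε' / (C + 1) with hεdef
  have hε : 0 < ε := by positivity
  set k : ContDiffBump (0 : E2) :=
    ⟨ε/2, ε, by positivity, by linarith⟩ with hk
  set ψε : E2 → ℝ := k.normed volume ⋆[ContinuousLinearMap.lsmul ℝ ℝ, volume] φg with hψε
  have hψεLip : LipschitzWith 1 ψε := lipschitz_bump_convolution k hφg
  have hψεC1 : ContDiff ℝ 1 ψε :=
    HasCompactSupport.contDiff_convolution_left _ k.hasCompactSupport_normed
      k.contDiff_normed hφg.continuous.locallyIntegrable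
  have hclose : ∀ x : E2, |φg x - ψε x| ≤ ε := by
    intro x
    have h := ContDiffBump.dist_normed_convolution_le (φ := k) (μ := volume) (ε := ε) (x₀ := x)
      hφg.continuous.aestronglyMeasurable (fun y hy => by
        have h2 := hφg.dist_le_mul y x
        rw [NNReal.coe_one, one_mul] at h2
        refine le_trans h2 (le_of_lt ?_)
        simpa [hk] using Metric.mem_ball.mp hy)
    rw [abs_sub_comm, ← Real.dist_eq]
    exact h
  -- compare integrals against fp and fm
  have hIφp : Integrable φg fp := integrable_of_compact_support hfpK hK hφg.continuous
  have hIφm : Integrable φg fm := integrable_of_compact_support hfmK hK hφg.continuous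
  have hIψp : Integrable ψε fp := integrable_of_compact_support hfpK hK hψεC1.continuous
  have hIψm : Integrable ψε fm := integrable_of_compact_support hfmK hK hψεC1.continuous
  have hdp : |∫ x, φg x ∂fp - ∫ x, ψε x ∂fp| ≤ ε * (fp Set.univ).toReal := by
    rw [← integral_sub hIφp hIψp]
    have := norm_integral_le_of_norm_le_const (μ := fp)
      (f := fun x => φg x - ψε x) (C := ε) (.of_forall fun x => by
        rw [Real.norm_eq_abs]; exact hclose x)
    simpa [measureReal_def] using this
  have hdm : |∫ x, φg x ∂fm - ∫ x, ψε x ∂fm| ≤ ε * (fm Set.univ).toReal := by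
    rw [← integral_sub hIφm hIψm]
    have := norm_integral_le_of_norm_le_const (μ := fm)
      (f := fun x => φg x - ψε x) (C := ε) (.of_forall fun x => by
        rw [Real.norm_eq_abs]; exact hclose x)
    simpa [measureReal_def] using this
  have hμbound : ∫ x, ⟪gradient ψε x, w x⟫ ∂μ ≤ (μ Set.univ).toReal := by
    have h := norm_integral_le_of_norm_le_const (μ := μ)
      (f := fun x => ⟪gradient ψε x, w x⟫) (C := 1) ?_
    · rw [one_mul] at h
      exact le_trans (le_abs_self _) h
    · filter_upwards [hw] with x hx
      rw [Real.norm_eq_abs]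
      refine le_trans (abs_real_inner_le_norm _ _) ?_
      exact mul_le_one₀ (norm_gradient_le_of_lipschitz hψεLip x) (norm_nonneg _) hx
  have hdiveq := hdiv ψε hψεC1
  have hεC : ε * C ≤ ε' := by
    rw [hεdef]
    rw [div_mul_eq_mul_div, div_le_iff₀ (by linarith)]
    nlinarith
  have habs1 : ∫ x, φg x ∂fp - ∫ x, ψε x ∂fp ≤ ε * (fp Set.univ).toReal :=
    le_trans (le_abs_self _) hdp
  have habs2 : ∫ x, ψε x ∂fm - ∫ x, φg x ∂fm ≤ ε * (fm Set.univ).toReal := by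
    refine le_trans ?_ hdm
    rw [abs_sub_comm]
    exact le_abs_self _
  calc ∫ x, φg x ∂fp - ∫ x, φg x ∂fm
      ≤ (∫ x, ψε x ∂fp - ∫ x, ψε x ∂fm) + ε * C := by
        rw [hC, mul_add]
        linarith
    _ = ∫ x, ⟪gradient ψε x, w x⟫ ∂μ + ε * C := by rw [hdiveq]
    _ ≤ (μ Set.univ).toReal + ε * C := by linarith
    _ ≤ (μ Set.univ).toReal + ε' := by linarith

end Beckmann9


open Beckmann Beckmann2 Beckmann3 Beckmann4 Beckmann5 Beckmann6 Beckmann7 Beckmann8 Beckmann9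

/-- the Beckmann flow `w_γ = -σ_γ ∇φ` induced by a transport plan has mass
at most the transport cost: `|w_γ|(K) ≤ σ_γ(K) ≤ ∫ |x - y| dγ`; moreover, if `γ` is an
optimal plan and strong duality holds (there is a Kantorovich potential `φ`), then `w_γ`
minimizes the mass among all vector measures `v = w·μ` with `∇·v = f⁺ - f⁻`, and the
minimal mass equals `∫ |x - y| dγ`. -/
theorem beckmann_flow_mass_equals_cost
    (K : Set E2) (hK : IsCompact K) (hKne : K.Nonempty)
    (fp fm : Measure E2) [IsFiniteMeasure fp] [IsFiniteMeasure fm]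
    (hfpK : fp Kᶜ = 0) (hfmK : fm Kᶜ = 0)
    (hmass : fp Set.univ = fm Set.univ)
    (γ : Measure (E2 × E2))
    (hγ1 : γ.map Prod.fst = fp) (hγ2 : γ.map Prod.snd = fm)
    (hseg : ∀ᵐ p ∂γ, segment ℝ p.1 p.2 ⊆ K)
    (hopt : ∀ γ' : Measure (E2 × E2), γ'.map Prod.fst = fp → γ'.map Prod.snd = fm →
      ∫ p, dist p.1 p.2 ∂γ ≤ ∫ p, dist p.1 p.2 ∂γ')
    (hduality : ∃ φ : E2 → ℝ, LipschitzOnWith 1 φ K ∧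
      ∫ p, dist p.1 p.2 ∂γ = ∫ x, φ x ∂fp - ∫ x, φ x ∂fm) :
    -- (1) the mass of the flow is bounded by the transport cost
    transportDensity γ Set.univ ≤ ENNReal.ofReal (∫ p, dist p.1 p.2 ∂γ) ∧
    -- (2) `w_γ` is an admissible flow: there is a unit direction field `w₀` with
    --     `∇·(w₀ · σ_γ) = f⁺ - f⁻`
    (∃ w₀ : E2 → E2, (∀ᵐ x ∂(transportDensity γ), ‖w₀ x‖ ≤ 1) ∧
      ∀ ψ : E2 → ℝ, ContDiff ℝ 1 ψ →
        ∫ x, ⟪gradient ψ x, w₀ x⟫ ∂(transportDensity γ)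
          = ∫ x, ψ x ∂fp - ∫ x, ψ x ∂fm) ∧
    -- (3) minimality: every admissible flow `v = w·μ` has mass at least the cost
    (∀ (μ : Measure E2), IsFiniteMeasure μ → μ Kᶜ = 0 →
      ∀ w : E2 → E2, (∀ᵐ x ∂μ, ‖w x‖ ≤ 1) →
      (∀ ψ : E2 → ℝ, ContDiff ℝ 1 ψ →
        ∫ x, ⟪gradient ψ x, w x⟫ ∂μ = ∫ x, ψ x ∂fp - ∫ x, ψ x ∂fm) →
      ∫ p, dist p.1 p.2 ∂γ ≤ (μ Set.univ).toReal) := by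
  haveI : IsFiniteMeasure γ := by
    constructor
    have h : γ.map Prod.fst Set.univ = γ Set.univ := by
      rw [Measure.map_apply measurable_fst MeasurableSet.univ]
      simp
    rw [← h, hγ1]
    exact measure_lt_top fp Set.univ
  have hint : Integrable (fun p : E2 × E2 => dist p.1 p.2) γ :=
    integrable_dist_of_ae_bound (ae_dist_le hK hseg)
  refine ⟨(transportDensity_univ_eq hint).le, ?_, ?_⟩
  · exact ⟨wdir γ, ae_norm_wdir_le hK hseg,
      fun ψ hψ => divergence_identity hK hseg hγ1 hγ2 ψ hψ⟩
  · intro μ hμfin hμK w hw hdiv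
    obtain ⟨φ, hφ, hcosteq⟩ := hduality
    obtain ⟨g, hg, hEq⟩ := hφ.extend_real
    have hgeq : ∀ (ν : Measure E2), ν Kᶜ = 0 → ∫ x, φ x ∂ν = ∫ x, g x ∂ν := by
      intro ν hν
      refine integral_congr_ae ?_
      refine (ae_iff.mpr ?_)
      refine measure_mono_null (fun x hx => ?_) hν
      simp only [Set.mem_setOf_eq] at hx
      intro hxK
      exact hx (hEq hxK)
    rw [hcosteq, hgeq fp hfpK, hgeq fm hfmK]
    exact minimality hK fp fm hfpK hfmK g hg μ hμfin hμK w hw hdiv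


end
end
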